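/- Let n ∈ ℕ, n ≥ 1, and λ > -1/2. Then for every real x ≥ 1, u_n(x) = (P_n^{(λ)})'(x)/P_n^{(λ)}(x) ≤ n(1/x + (n-1)/((2λ+1)x³)). -/

import Mathlib

/-- Chebyshev polynomials of the first kind (as real functions):
`T_0 = 1`, `T_1 = x`, `T_{n+2}(x) = 2x T_{n+1}(x) - T_n(x)`. -/
noncomputable def chebT : ℕ → ℝ → ℝ
  | 0 => fun _ => 1
  | 1 => fun x => x
  | n + 2 => fun x => 2 * x * chebT (n + 1) x - chebT n x

/-- The ultraspherical (Gegenbauer) polynomials for `lam ≠ 0`, via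
`P_0 = 1`, `P_1 = 2λx`, `(n+1)P_{n+1}(x) = 2(n+λ)x P_n(x) - (n+2λ-1)P_{n-1}(x)`. -/
noncomputable def gegenRec (lam : ℝ) : ℕ → ℝ → ℝ
  | 0 => fun _ => 1
  | 1 => fun x => 2 * lam * x
  | n + 2 => fun x =>
      (2 * ((n : ℝ) + 1 + lam) * x * gegenRec lam (n + 1) x -
        ((n : ℝ) + 2 * lam) * gegenRec lam n x) / ((n : ℝ) + 2)

/-- The `n`-th ultraspherical polynomial `P_n^{(λ)}`; for `λ = 0` it is taken to be the
Chebyshev polynomial of the first kind `T_n`. -/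
noncomputable def ultra (lam : ℝ) (n : ℕ) : ℝ → ℝ :=
  if lam = 0 then chebT n else gegenRec lam n

/-- The ratio `u_n(x) = (P_n^{(λ)})'(x) / P_n^{(λ)}(x)`. -/
noncomputable def uRatio (lam : ℝ) (n : ℕ) (x : ℝ) : ℝ :=
  deriv (ultra lam n) x / ultra lam n x

noncomputable def chebT' : ℕ → ℝ → ℝ
  | 0 => fun _ => 0
  | 1 => fun _ => 1
  | n + 2 => fun x => 2 * chebT (n + 1) x + 2 * x * chebT' (n + 1) x - chebT' n x

lemma chebT_hasDerivAt (n : ℕ) (x : ℝ) : HasDerivAt (chebT n) (chebT' n x) x := by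
  have H : ∀ n : ℕ, (∀ y : ℝ, HasDerivAt (chebT n) (chebT' n y) y) ∧
      (∀ y : ℝ, HasDerivAt (chebT (n+1)) (chebT' (n+1) y) y) := by
    intro n
    induction n with
    | zero =>
      constructor
      · intro y; simpa [chebT, chebT'] using (hasDerivAt_const y (1:ℝ))
      · intro y; simpa [chebT, chebT'] using (hasDerivAt_id' y)
    | succ k ih =>
      refine ⟨ih.2, fun y => ?_⟩
      have h1 := ih.1 y
      have h2 := ih.2 y
      have ha : HasDerivAt (fun z : ℝ => 2*z) 2 y := by
        simpa using (hasDerivAt_id y).const_mul (2:ℝ)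
      have key : HasDerivAt (fun z => 2*z*chebT (k+1) z - chebT k z)
          (2*chebT (k+1) y + 2*y*chebT' (k+1) y - chebT' k y) y := by
        exact (ha.mul h2).sub h1
      exact key
  exact (H n).1 x

lemma coreIneq (ν μ x : ℝ) (hν : 1 ≤ ν) (hμ : 0 < μ) (hx : 1 ≤ x) :
    ((ν+1)*μ*x^2 - (ν+1)*ν*(x^2-1)) * ((2*ν+μ-1)*x*(μ*x^3) - (ν*μ*x^2 - ν*(ν-1)*(x^2-1)))
      ≤ (ν+1)*(ν+μ-1)*(μ^2*x^6) := by
  have key : (ν+1)*(ν+μ-1)*(μ^2*x^6) -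
      ((ν+1)*μ*x^2 - (ν+1)*ν*(x^2-1)) * ((2*ν+μ-1)*x*(μ*x^3) - (ν*μ*x^2 - ν*(ν-1)*(x^2-1)))
      = (x^2-1)^2 * (ν*(ν+1)*(ν*(ν-1) + μ*x^2*(2*ν-1))) := by ring
  have h1 : (0:ℝ) ≤ (x^2-1)^2 := sq_nonneg _
  have h2 : (0:ℝ) ≤ ν*(ν-1) := by nlinarith
  have h3 : (0:ℝ) ≤ μ*x^2*(2*ν-1) :=
    mul_nonneg (mul_nonneg hμ.le (by nlinarith)) (by linarith)
  have h4 : (0:ℝ) ≤ ν*(ν+1)*(ν*(ν-1) + μ*x^2*(2*ν-1)) := by nlinarith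
  nlinarith [mul_nonneg h1 h4]

lemma cheb_rec (n : ℕ) (x : ℝ) : chebT (n+2) x = 2*x*chebT (n+1) x - chebT n x := rfl
lemma cheb_rec' (n : ℕ) (x : ℝ) :
    chebT' (n+2) x = 2*chebT (n+1) x + 2*x*chebT' (n+1) x - chebT' n x := rfl

lemma cheb_pos (x : ℝ) (hx : 1 ≤ x) :
    ∀ n : ℕ, 0 < chebT n x ∧ x * chebT n x ≤ chebT (n+1) x := by
  intro n
  induction n with
  | zero =>
    constructor
    · norm_num [chebT]
    · simp [chebT]
  | succ k ih =>
    obtain ⟨h1, h2⟩ := ih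
    have hb : 0 < chebT (k+1) x := by nlinarith
    refine ⟨hb, ?_⟩
    rw [cheb_rec]
    nlinarith

lemma cheb_one : ∀ n : ℕ, chebT n 1 = 1 := by
  have H : ∀ n : ℕ, chebT n 1 = 1 ∧ chebT (n+1) 1 = 1 := by
    intro n
    induction n with
    | zero => constructor <;> simp [chebT]
    | succ k ih => exact ⟨ih.2, by rw [cheb_rec, ih.1, ih.2]; ring⟩
  exact fun n => (H n).1

lemma cheb_deriv_one : ∀ n : ℕ, chebT' n 1 = (n:ℝ)^2 := by
  have H : ∀ n : ℕ, chebT' n 1 = (n:ℝ)^2 ∧ chebT' (n+1) 1 = ((n:ℝ)+1)^2 := by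
    intro n
    induction n with
    | zero => constructor <;> norm_num [chebT']
    | succ k ih =>
      refine ⟨by push_cast; exact ih.2, ?_⟩
      rw [cheb_rec', ih.1, ih.2, cheb_one]
      push_cast
      ring
  exact fun n => (H n).1

lemma cheb_deriv_id : ∀ (n : ℕ) (x : ℝ),
    (x^2-1) * chebT' (n+1) x = ((n:ℝ)+1)*x*chebT (n+1) x - ((n:ℝ)+1)*chebT n x := by
  have H : ∀ (n : ℕ) (x : ℝ),
      ((x^2-1) * chebT' (n+1) x = ((n:ℝ)+1)*x*chebT (n+1) x - ((n:ℝ)+1)*chebT n x) ∧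
      ((x^2-1) * chebT' (n+2) x = ((n:ℝ)+2)*x*chebT (n+2) x - ((n:ℝ)+2)*chebT (n+1) x) := by
    intro n
    induction n with
    | zero =>
      intro x
      constructor
      · norm_num [chebT, chebT']; ring
      · norm_num [chebT, chebT', cheb_rec, cheb_rec']; ring
    | succ k ih =>
      intro x
      constructor
      · show (x^2-1) * chebT' (k+2) x = ((↑(k+1):ℝ)+1)*x*chebT (k+2) x - ((↑(k+1):ℝ)+1)*chebT (k+1) x
        have h := (ih x).2
        push_cast at h ⊢
        linarith
      · show (x^2-1) * chebT' (k+3) x = ((↑(k+1):ℝ)+2)*x*chebT (k+3) x - ((↑(k+1):ℝ)+2)*chebT (k+2) x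
        have IH1 := (ih x).1
        have IH2 := (ih x).2
        have h3 : chebT (k+3) x = 2*x*chebT (k+2) x - chebT (k+1) x := rfl
        have h3' : chebT' (k+3) x = 2*chebT (k+2) x + 2*x*chebT' (k+2) x - chebT' (k+1) x := rfl
        have hR : chebT (k+2) x = 2*x*chebT (k+1) x - chebT k x := rfl
        rw [h3, h3']
        push_cast
        linear_combination (2*x) * IH2 - IH1 + ((k:ℝ)+1) * hR
  exact fun n x => (H n x).1

lemma cheb_G (x : ℝ) (hx : 1 ≤ x) : ∀ m : ℕ,
    (((m:ℝ)+1)*1*x^2 - ((m:ℝ)+1)*(m:ℝ)*(x^2-1)) * (chebT (m+1) x)^2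
      ≤ 1*x^3*(((m:ℝ)+1)*(chebT m x * chebT (m+1) x)) := by
  have hx0 : (0:ℝ) < x := by linarith
  intro m
  induction m with
  | zero =>
    apply le_of_eq
    norm_num [chebT]
    ring
  | succ m ih =>
    show (((↑(m+1):ℝ)+1)*1*x^2 - ((↑(m+1):ℝ)+1)*(↑(m+1):ℝ)*(x^2-1)) * (chebT (m+2) x)^2
      ≤ 1*x^3*(((↑(m+1):ℝ)+1)*(chebT (m+1) x * chebT (m+2) x))
    push_cast
    obtain ⟨ha, hK⟩ := cheb_pos x hx m
    obtain ⟨hb, hK2⟩ := cheb_pos x hx (m+1)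
    obtain ⟨hc, _⟩ := cheb_pos x hx (m+2)
    set a := chebT m x with hadef
    set b := chebT (m+1) x with hbdef
    set c := chebT (m+2) x with hcdef
    have hmn : (0:ℝ) ≤ (m:ℝ) := Nat.cast_nonneg m
    have hrec : c = 2*x*b - a := rfl
    have core := coreIneq ((m:ℝ)+1) 1 x (by linarith) one_pos hx
    have s1 : (((m:ℝ)+1)*x^2 - ((m:ℝ)+1)*(m:ℝ)*(x^2-1))*b ≤ x^3*(((m:ℝ)+1)*a) := by
      apply le_of_mul_le_mul_right ?_ hb
      nlinarith [ih]
    rcases le_or_gt (((m:ℝ)+2)*x^2 - ((m:ℝ)+2)*((m:ℝ)+1)*(x^2-1)) 0 with hB | hB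
    · have h1 : (((m:ℝ)+1+1)*1*x^2 - ((m:ℝ)+1+1)*((m:ℝ)+1)*(x^2-1)) * c^2 ≤ 0 := by
        nlinarith [sq_nonneg c]
      have h2 : (0:ℝ) ≤ 1*x^3*(((m:ℝ)+1+1)*(b*c)) := by
        have hx3 : (0:ℝ) < x^3 := by positivity
        nlinarith [mul_nonneg (mul_nonneg hx3.le (show (0:ℝ) ≤ (m:ℝ)+1+1 by linarith))
          (mul_pos hb hc).le]
      linarith
    · have e3 : (((m:ℝ)+2)*x^2 - ((m:ℝ)+2)*((m:ℝ)+1)*(x^2-1))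
          * (2*((m:ℝ)+1)*x*(1*x^3) - (((m:ℝ)+1)*x^2 - ((m:ℝ)+1)*(m:ℝ)*(x^2-1)))
          ≤ ((m:ℝ)+2)*((m:ℝ)+1)*(1^2*x^6) := by nlinarith [core]
      have s2 : (((m:ℝ)+2)*x^2 - ((m:ℝ)+2)*((m:ℝ)+1)*(x^2-1))*(((m:ℝ)+1)*c)*x^3
          ≤ (((m:ℝ)+2)*((m:ℝ)+1)*x^6)*b := by
        have e2 := mul_le_mul_of_nonneg_left s1 hB.le
        have e4 := mul_le_mul_of_nonneg_right e3 hb.le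
        have e1 : (((m:ℝ)+2)*x^2 - ((m:ℝ)+2)*((m:ℝ)+1)*(x^2-1))*(((m:ℝ)+1)*c)*x^3
            = (((m:ℝ)+2)*x^2 - ((m:ℝ)+2)*((m:ℝ)+1)*(x^2-1))*(2*((m:ℝ)+1)*x*(1*x^3))*b
              - (((m:ℝ)+2)*x^2 - ((m:ℝ)+2)*((m:ℝ)+1)*(x^2-1))*(x^3*(((m:ℝ)+1)*a)) := by
          linear_combination ((((m:ℝ)+2)*x^2 - ((m:ℝ)+2)*((m:ℝ)+1)*(x^2-1))*(((m:ℝ)+1))*x^3) * hrec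
        linarith [e1, e2, e4]
      have hx3 : (0:ℝ) < x^3 := by positivity
      have s3 : (((m:ℝ)+2)*x^2 - ((m:ℝ)+2)*((m:ℝ)+1)*(x^2-1))*(((m:ℝ)+1)*c)
          ≤ (((m:ℝ)+2)*((m:ℝ)+1)*x^3)*b := by
        apply le_of_mul_le_mul_right ?_ hx3
        linarith [s2]

      have s4 := mul_le_mul_of_nonneg_right s3 hc.le
      have hm1 : (0:ℝ) < (m:ℝ)+1 := by linarith
      apply le_of_mul_le_mul_left ?_ hm1
      linarith [s4]

lemma ratio_le (n μ x p a q e : ℝ) (hμ : 0 < μ) (hx1 : 1 < x)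
    (hp : p ≠ 0)
    (hI : (x^2-1)*q = n*x*p - e*a)
    (hG : (n*μ*x^2 - n*(n-1)*(x^2-1))*p^2 ≤ μ*x^3*(e*(a*p))) :
    q/p ≤ n*(1/x + (n-1)/(μ*x^3)) := by
  have hx0 : (0:ℝ) < x := lt_trans one_pos hx1
  have hp2 : (0:ℝ) < p^2 := by positivity
  have hx2 : (0:ℝ) < x^2-1 := by nlinarith
  have hfac : (0:ℝ) < (x^2-1)*(μ*x^3) := by positivity
  have h2 : (n*(1/x+(n-1)/(μ*x^3)))*p^2*((x^2-1)*(μ*x^3))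
      = (n*μ*x^2+n*(n-1))*(x^2-1)*p^2 := by
    field_simp
  have key : q*p*((x^2-1)*(μ*x^3)) ≤ (n*(1/x + (n-1)/(μ*x^3)))*p^2*((x^2-1)*(μ*x^3)) := by
    have h1 : q*p*(x^2-1) = n*x*p^2 - e*(a*p) := by linear_combination p*hI
    have h3 : q*p*((x^2-1)*(μ*x^3)) = (n*x*p^2)*(μ*x^3) - (μ*x^3*(e*(a*p))) := by
      linear_combination (μ*x^3)*h1
    rw [h2]
    nlinarith [hG, h3]
  have key2 : q*p ≤ (n*(1/x + (n-1)/(μ*x^3)))*p^2 := le_of_mul_le_mul_right key hfac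
  have hqp : q/p = q*p/p^2 := by
    rw [pow_two, mul_div_mul_right _ _ hp]
  rw [hqp, div_le_iff₀ hp2]
  exact key2

noncomputable def gegenRec' (t : ℝ) : ℕ → ℝ → ℝ
  | 0 => fun _ => 0
  | 1 => fun _ => 2 * t
  | n + 2 => fun x =>
      (2 * ((n : ℝ) + 1 + t) * (gegenRec t (n + 1) x + x * gegenRec' t (n + 1) x) -
        ((n : ℝ) + 2 * t) * gegenRec' t n x) / ((n : ℝ) + 2)

lemma grec (t : ℝ) (m : ℕ) (x : ℝ) :
    ((m:ℝ)+2) * gegenRec t (m+2) x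
      = 2*((m:ℝ)+1+t)*x*gegenRec t (m+1) x - ((m:ℝ)+2*t)*gegenRec t m x := by
  have hm : ((m:ℝ)+2) ≠ 0 := by positivity
  show ((m:ℝ)+2) * ((2*((m:ℝ)+1+t)*x*gegenRec t (m+1) x -
      ((m:ℝ)+2*t)*gegenRec t m x)/((m:ℝ)+2)) = _
  field_simp

lemma grec' (t : ℝ) (m : ℕ) (x : ℝ) :
    ((m:ℝ)+2) * gegenRec' t (m+2) x
      = 2*((m:ℝ)+1+t)*(gegenRec t (m+1) x + x*gegenRec' t (m+1) x)
        - ((m:ℝ)+2*t)*gegenRec' t m x := by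
  have hm : ((m:ℝ)+2) ≠ 0 := by positivity
  show ((m:ℝ)+2) * ((2*((m:ℝ)+1+t)*(gegenRec t (m+1) x + x*gegenRec' t (m+1) x) -
      ((m:ℝ)+2*t)*gegenRec' t m x)/((m:ℝ)+2)) = _
  field_simp

lemma geg_hasDerivAt (t : ℝ) (n : ℕ) (x : ℝ) :
    HasDerivAt (gegenRec t n) (gegenRec' t n x) x := by
  have H : ∀ n : ℕ, (∀ y : ℝ, HasDerivAt (gegenRec t n) (gegenRec' t n y) y) ∧
      (∀ y : ℝ, HasDerivAt (gegenRec t (n+1)) (gegenRec' t (n+1) y) y) := by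
    intro n
    induction n with
    | zero =>
      constructor
      · intro y; simpa [gegenRec, gegenRec'] using (hasDerivAt_const y (1:ℝ))
      · intro y
        have : HasDerivAt (fun z : ℝ => 2*t*z) (2*t) y := by
          simpa using (hasDerivAt_id y).const_mul (2*t)
        exact this
    | succ k ih =>
      refine ⟨ih.2, fun y => ?_⟩
      have h1 := ih.1 y
      have h2 := ih.2 y
      have ha : HasDerivAt (fun z : ℝ => 2*((k:ℝ)+1+t)*z) (2*((k:ℝ)+1+t)) y := by
        simpa using (hasDerivAt_id y).const_mul (2*((k:ℝ)+1+t))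
      have key : HasDerivAt
          (fun z => (2*((k:ℝ)+1+t)*z*gegenRec t (k+1) z - ((k:ℝ)+2*t)*gegenRec t k z)/((k:ℝ)+2))
          (gegenRec' t (k+2) y) y := by
        have hb := ((ha.mul h2).sub (h1.const_mul ((k:ℝ)+2*t))).div_const ((k:ℝ)+2)
        convert hb using 1
        show (2*((k:ℝ)+1+t)*(gegenRec t (k+1) y + y*gegenRec' t (k+1) y) -
            ((k:ℝ)+2*t)*gegenRec' t k y)/((k:ℝ)+2) = _
        ring
        all_goals rfl
      exact key
  exact (H n).1 x

lemma geg_K (t : ℝ) (ht : t ≠ 0) (hmu : 0 < 2*t+1) (x : ℝ) (hx : 1 ≤ x) : ∀ m : ℕ,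
    0 ≤ ((m:ℝ)+2*t)*(t*gegenRec t m x) ∧ 0 < t*gegenRec t (m+1) x ∧
      ((m:ℝ)+2*t)*x*(t*gegenRec t m x) ≤ ((m:ℝ)+1)*(t*gegenRec t (m+1) x) := by
  have hx0 : (0:ℝ) < x := by linarith
  have ht2 : (0:ℝ) < t^2 := lt_of_le_of_ne (sq_nonneg t) (Ne.symm (pow_ne_zero 2 ht))
  intro m
  induction m with
  | zero =>
    refine ⟨?_, ?_, ?_⟩
    · norm_num [gegenRec]
      nlinarith [ht2]
    · norm_num [gegenRec]
      nlinarith [mul_pos ht2 hx0]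
    · norm_num [gegenRec]
      nlinarith [ht2, mul_pos ht2 hx0]
  | succ m ih =>
    obtain ⟨k1, k2, k3⟩ := ih
    have hrect : ((m:ℝ)+2)*(t*gegenRec t (m+2) x)
        = 2*((m:ℝ)+1+t)*x*(t*gegenRec t (m+1) x) - ((m:ℝ)+2*t)*(t*gegenRec t m x) := by
      linear_combination t * (grec t m x)
    have A := mul_le_mul_of_nonneg_left k3 hx0.le
    have B := mul_nonneg (show (0:ℝ) ≤ x^2-1 by nlinarith) k1
    have c3 : ((↑(m+1):ℝ)+2*t)*x*(t*gegenRec t (m+1) x)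
        ≤ ((↑(m+1):ℝ)+1)*(t*gegenRec t (m+2) x) := by
      push_cast
      nlinarith [hrect, A, B]
    have c2 : 0 < t*gegenRec t (m+2) x := by
      have hpos : 0 < ((↑(m+1):ℝ)+2*t)*x*(t*gegenRec t (m+1) x) := by
        apply mul_pos (mul_pos _ hx0) k2
        push_cast
        have : (0:ℝ) ≤ (m:ℝ) := Nat.cast_nonneg m
        linarith
      have := lt_of_lt_of_le hpos c3
      push_cast at this
      nlinarith [this, Nat.cast_nonneg (α := ℝ) m]
    refine ⟨?_, ?_, ?_⟩
    · apply mul_nonneg _ k2.le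
      push_cast
      have : (0:ℝ) ≤ (m:ℝ) := Nat.cast_nonneg m
      linarith
    · show 0 < t*gegenRec t (m+2) x
      exact c2
    · show ((↑(m+1):ℝ)+2*t)*x*(t*gegenRec t (m+1) x) ≤ ((↑(m+1):ℝ)+1)*(t*gegenRec t (m+2) x)
      exact c3

lemma geg_I (t : ℝ) : ∀ (m : ℕ) (x : ℝ),
    (x^2-1)*gegenRec' t (m+1) x
      = ((m:ℝ)+1)*x*gegenRec t (m+1) x - ((m:ℝ)+2*t)*gegenRec t m x := by
  have H : ∀ (m : ℕ) (x : ℝ),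
      ((x^2-1)*gegenRec' t (m+1) x
        = ((m:ℝ)+1)*x*gegenRec t (m+1) x - ((m:ℝ)+2*t)*gegenRec t m x) ∧
      ((x^2-1)*gegenRec' t (m+2) x
        = ((m:ℝ)+2)*x*gegenRec t (m+2) x - ((m:ℝ)+1+2*t)*gegenRec t (m+1) x) := by
    intro m
    induction m with
    | zero =>
      intro x
      constructor
      · norm_num [gegenRec, gegenRec']
        ring
      · norm_num [gegenRec, gegenRec']
        ring
    | succ m ih =>
      intro x
      constructor
      · have h := (ih x).2
        push_cast at h ⊢
        linarith [h]
      · show (x^2-1)*gegenRec' t (m+3) x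
          = ((↑(m+1):ℝ)+2)*x*gegenRec t (m+3) x - ((↑(m+1):ℝ)+1+2*t)*gegenRec t (m+2) x
        have IH1 := (ih x).1
        have IH2 := (ih x).2
        have hq : ((↑(m+1):ℝ)+2)*gegenRec' t (m+3) x
            = 2*((↑(m+1):ℝ)+1+t)*(gegenRec t (m+2) x + x*gegenRec' t (m+2) x)
              - ((↑(m+1):ℝ)+2*t)*gegenRec' t (m+1) x := grec' t (m+1) x
        have hp : ((↑(m+1):ℝ)+2)*gegenRec t (m+3) x
            = 2*((↑(m+1):ℝ)+1+t)*x*gegenRec t (m+2) x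
              - ((↑(m+1):ℝ)+2*t)*gegenRec t (m+1) x := grec t (m+1) x
        have hR : ((m:ℝ)+2)*gegenRec t (m+2) x
            = 2*((m:ℝ)+1+t)*x*gegenRec t (m+1) x - ((m:ℝ)+2*t)*gegenRec t m x := grec t m x
        have hm3 : ((m:ℝ)+3) ≠ 0 := by positivity
        apply mul_left_cancel₀ hm3
        push_cast at hq hp ⊢
        linear_combination (x^2-1)*hq - (((m:ℝ)+3)*x)*hp + (2*((m:ℝ)+2+t)*x)*IH2
          - ((m:ℝ)+1+2*t)*IH1 + ((m:ℝ)+1+2*t)*hR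
  exact fun m x => (H m x).1

set_option maxHeartbeats 1000000 in
lemma geg_G (t : ℝ) (ht : t ≠ 0) (hmu : 0 < 2*t+1) (x : ℝ) (hx : 1 ≤ x) : ∀ m : ℕ,
    (((m:ℝ)+1)*(2*t+1)*x^2 - ((m:ℝ)+1)*(m:ℝ)*(x^2-1)) * (t*gegenRec t (m+1) x)^2
      ≤ (2*t+1)*x^3*(((m:ℝ)+2*t)*((t*gegenRec t m x)*(t*gegenRec t (m+1) x))) := by
  have hx0 : (0:ℝ) < x := by linarith
  intro m
  induction m with
  | zero =>
    apply le_of_eq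
    norm_num [gegenRec]
    ring
  | succ m ih =>
    obtain ⟨hK1, hb, hK3⟩ := geg_K t ht hmu x hx m
    obtain ⟨_, hc, _⟩ := geg_K t ht hmu x hx (m+1)
    show (((↑(m+1):ℝ)+1)*(2*t+1)*x^2 - ((↑(m+1):ℝ)+1)*(↑(m+1):ℝ)*(x^2-1))
        * (t*gegenRec t (m+2) x)^2
      ≤ (2*t+1)*x^3*(((↑(m+1):ℝ)+2*t)*((t*gegenRec t (m+1) x)*(t*gegenRec t (m+2) x)))
    push_cast
    set a := t*gegenRec t m x with hadef
    set b := t*gegenRec t (m+1) x with hbdef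
    set c := t*gegenRec t (m+2) x with hcdef
    have hmn : (0:ℝ) ≤ (m:ℝ) := Nat.cast_nonneg m
    have hrect : ((m:ℝ)+2)*c = 2*((m:ℝ)+1+t)*x*b - ((m:ℝ)+2*t)*a := by
      linear_combination t * (grec t m x)
    have core := coreIneq ((m:ℝ)+1) (2*t+1) x (by linarith) hmu hx
    have s1 : (((m:ℝ)+1)*(2*t+1)*x^2 - ((m:ℝ)+1)*(m:ℝ)*(x^2-1))*b
        ≤ (2*t+1)*x^3*(((m:ℝ)+2*t)*a) := by
      apply le_of_mul_le_mul_right ?_ hb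
      nlinarith [ih]
    rcases le_or_gt (((m:ℝ)+2)*(2*t+1)*x^2 - ((m:ℝ)+2)*((m:ℝ)+1)*(x^2-1)) 0 with hB | hB
    · have h1 : (((m:ℝ)+1+1)*(2*t+1)*x^2 - ((m:ℝ)+1+1)*((m:ℝ)+1)*(x^2-1)) * c^2 ≤ 0 := by
        nlinarith [sq_nonneg c]
      have h2 : (0:ℝ) ≤ (2*t+1)*x^3*(((m:ℝ)+1+2*t)*(b*c)) := by
        have hx3 : (0:ℝ) < x^3 := by positivity
        have hbc := mul_pos hb hc
        nlinarith [mul_nonneg (mul_nonneg (mul_nonneg hmu.le hx3.le)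
          (show (0:ℝ) ≤ (m:ℝ)+1+2*t by linarith)) hbc.le]
      linarith
    · have e3 : (((m:ℝ)+2)*(2*t+1)*x^2 - ((m:ℝ)+2)*((m:ℝ)+1)*(x^2-1))
          * (2*((m:ℝ)+1+t)*x*((2*t+1)*x^3)
            - (((m:ℝ)+1)*(2*t+1)*x^2 - ((m:ℝ)+1)*(m:ℝ)*(x^2-1)))
          ≤ ((m:ℝ)+2)*((m:ℝ)+1+2*t)*((2*t+1)^2*x^6) := by nlinarith [core]
      have s2 : (((m:ℝ)+2)*(2*t+1)*x^2 - ((m:ℝ)+2)*((m:ℝ)+1)*(x^2-1))*(((m:ℝ)+2)*c)*((2*t+1)*x^3)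
          ≤ (((m:ℝ)+2)*((m:ℝ)+1+2*t)*((2*t+1)^2*x^6))*b := by
        have e2 := mul_le_mul_of_nonneg_left s1 hB.le
        have e4 := mul_le_mul_of_nonneg_right e3 hb.le
        have e1 : (((m:ℝ)+2)*(2*t+1)*x^2 - ((m:ℝ)+2)*((m:ℝ)+1)*(x^2-1))*(((m:ℝ)+2)*c)*((2*t+1)*x^3)
            = (((m:ℝ)+2)*(2*t+1)*x^2 - ((m:ℝ)+2)*((m:ℝ)+1)*(x^2-1))*(2*((m:ℝ)+1+t)*x*((2*t+1)*x^3))*b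
              - (((m:ℝ)+2)*(2*t+1)*x^2 - ((m:ℝ)+2)*((m:ℝ)+1)*(x^2-1))*((2*t+1)*x^3*(((m:ℝ)+2*t)*a)) := by
          linear_combination ((((m:ℝ)+2)*(2*t+1)*x^2 - ((m:ℝ)+2)*((m:ℝ)+1)*(x^2-1))*((2*t+1)*x^3)) * hrect
        linarith [e1, e2, e4]
      have hmx3 : (0:ℝ) < (2*t+1)*x^3 := by positivity
      have s3 : (((m:ℝ)+2)*(2*t+1)*x^2 - ((m:ℝ)+2)*((m:ℝ)+1)*(x^2-1))*(((m:ℝ)+2)*c)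
          ≤ (((m:ℝ)+2)*((m:ℝ)+1+2*t)*((2*t+1)*x^3))*b := by
        apply le_of_mul_le_mul_right ?_ hmx3
        linarith [s2]
      have s4 := mul_le_mul_of_nonneg_right s3 hc.le
      have hm2 : (0:ℝ) < (m:ℝ)+2 := by linarith
      apply le_of_mul_le_mul_left ?_ hm2
      linarith [s4]

lemma geg_one (t : ℝ) (hmu : 0 < 2*t+1) : ∀ m : ℕ,
    (((m:ℝ)+1)*gegenRec t (m+1) 1 = ((m:ℝ)+2*t)*gegenRec t m 1) ∧
      ((2*t+1)*gegenRec' t m 1 = (m:ℝ)*((m:ℝ)+2*t)*gegenRec t m 1) := by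
  have H : ∀ m : ℕ,
      ((((m:ℝ)+1)*gegenRec t (m+1) 1 = ((m:ℝ)+2*t)*gegenRec t m 1) ∧
        ((2*t+1)*gegenRec' t m 1 = (m:ℝ)*((m:ℝ)+2*t)*gegenRec t m 1)) ∧
      ((((m:ℝ)+2)*gegenRec t (m+2) 1 = ((m:ℝ)+1+2*t)*gegenRec t (m+1) 1) ∧
        ((2*t+1)*gegenRec' t (m+1) 1 = ((m:ℝ)+1)*((m:ℝ)+1+2*t)*gegenRec t (m+1) 1)) := by
    intro m
    induction m with
    | zero =>
      refine ⟨⟨?_, ?_⟩, ?_, ?_⟩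
      · norm_num [gegenRec]
      · norm_num [gegenRec']
      · have h := grec t 0 1
        norm_num [gegenRec] at h ⊢
        linarith [h]
      · have e1 : gegenRec' t (0+1) 1 = 2*t := rfl
        have e2 : gegenRec t (0+1) 1 = 2*t*1 := rfl
        rw [e1, e2]
        push_cast
        ring
    | succ m ih =>
      obtain ⟨⟨hC1m, hC2m⟩, hC1m1, hC2m1⟩ := ih
      have hrec : ((↑(m+1):ℝ)+2)*gegenRec t (m+3) 1
          = 2*((↑(m+1):ℝ)+1+t)*1*gegenRec t (m+2) 1
            - ((↑(m+1):ℝ)+2*t)*gegenRec t (m+1) 1 := grec t (m+1) 1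
      have hq : ((m:ℝ)+2)*gegenRec' t (m+2) 1
          = 2*((m:ℝ)+1+t)*(gegenRec t (m+1) 1 + 1*gegenRec' t (m+1) 1)
            - ((m:ℝ)+2*t)*gegenRec' t m 1 := grec' t m 1
      have c1 : ((↑(m+1):ℝ)+1)*gegenRec t (m+2) 1 = ((↑(m+1):ℝ)+2*t)*gegenRec t (m+1) 1 := by
        push_cast
        push_cast at hC1m1
        linarith [hC1m1]
      have c2 : (2*t+1)*gegenRec' t (m+1) 1 = (↑(m+1):ℝ)*((↑(m+1):ℝ)+2*t)*gegenRec t (m+1) 1 := by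
        push_cast
        push_cast at hC2m1
        linarith [hC2m1]
      refine ⟨⟨c1, c2⟩, ?_, ?_⟩
      · push_cast
        push_cast at hrec hC1m1
        linear_combination hrec + hC1m1
      · show (2*t+1)*gegenRec' t (m+2) 1 = ((↑(m+1):ℝ)+1)*((↑(m+1):ℝ)+1+2*t)*gegenRec t (m+2) 1
        have hm2 : ((m:ℝ)+2) ≠ 0 := by positivity
        apply mul_left_cancel₀ hm2
        push_cast
        push_cast at hq hC2m1 hC2m hC1m hC1m1
        linear_combination (2*t+1)*hq + 2*((m:ℝ)+1+t)*hC2m1 - ((m:ℝ)+2*t)*hC2m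
          + (m:ℝ)*((m:ℝ)+2*t)*hC1m - ((m:ℝ)+2)*((m:ℝ)+2+2*t)*hC1m1
  exact fun m => (H m).1

theorem ultra_ratio_upper_bound_cubic (n : ℕ) (hn : 1 ≤ n) (lam : ℝ) (hlam : -(1 / 2) < lam)
    (x : ℝ) (hx : 1 ≤ x) :
    uRatio lam n x ≤
      (n : ℝ) * (1 / x + ((n : ℝ) - 1) / ((2 * lam + 1) * x ^ 3)) := by
  obtain ⟨m, rfl⟩ : ∃ m, n = m+1 := ⟨n-1, (Nat.succ_pred_eq_of_pos hn).symm⟩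
  by_cases h0 : lam = 0
  · subst h0
    have hu : ultra 0 (m+1) = chebT (m+1) := if_pos rfl
    rw [uRatio, hu, (chebT_hasDerivAt (m+1) x).deriv]
    rcases eq_or_lt_of_le hx with h1 | h1
    · rw [← h1, cheb_deriv_one, cheb_one]
      push_cast
      norm_num
      nlinarith [Nat.cast_nonneg (α := ℝ) m]
    · have key := ratio_le ((m:ℝ)+1) (2*0+1) x (chebT (m+1) x) (chebT m x)
        (chebT' (m+1) x) ((m:ℝ)+1) (by norm_num) h1
        (ne_of_gt (cheb_pos x hx (m+1)).1)
        (cheb_deriv_id m x)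
        (by have h := cheb_G x hx m; linarith [h])
      push_cast
      norm_num at key ⊢
      linarith [key]
  · have hmu : (0:ℝ) < 2*lam+1 := by linarith
    have hu : ultra lam (m+1) = gegenRec lam (m+1) := if_neg h0
    rw [uRatio, hu, (geg_hasDerivAt lam (m+1) x).deriv]
    rcases eq_or_lt_of_le hx with h1 | h1
    · rw [← h1]
      have hAt : 0 < lam * gegenRec lam (m+1) 1 := (geg_K lam h0 hmu 1 le_rfl m).2.1
      have hane : gegenRec lam (m+1) 1 ≠ 0 := by
        intro h
        rw [h, mul_zero] at hAt
        exact lt_irrefl 0 hAt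
      have hC : (2*lam+1)*gegenRec' lam (m+1) 1
          = ((↑(m+1):ℝ))*((↑(m+1):ℝ)+2*lam)*gegenRec lam (m+1) 1 := (geg_one lam hmu (m+1)).2
      have hd : gegenRec' lam (m+1) 1 / gegenRec lam (m+1) 1
          = ((↑(m+1):ℝ))*((↑(m+1):ℝ)+2*lam)/(2*lam+1) := by
        rw [div_eq_div_iff hane (ne_of_gt hmu)]
        linarith [hC]
      rw [hd]
      have h2l : (2*lam+1) ≠ 0 := ne_of_gt hmu
      apply le_of_eq
      push_cast
      field_simp
      ring
    · have hPt : 0 < lam * gegenRec lam (m+1) x := (geg_K lam h0 hmu x hx m).2.1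
      have hPne : lam * gegenRec lam (m+1) x ≠ 0 := ne_of_gt hPt
      have key := ratio_le ((m:ℝ)+1) (2*lam+1) x (lam*gegenRec lam (m+1) x)
        (lam*gegenRec lam m x) (lam*gegenRec' lam (m+1) x) ((m:ℝ)+2*lam) hmu h1 hPne
        (by linear_combination lam * geg_I lam m x)
        (by have h := geg_G lam h0 hmu x hx m; nlinarith [h])
      rw [mul_div_mul_left _ _ h0] at key
      push_cast at key ⊢
      linarith [key]
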